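/- Let n > 3 and let (P,·) = μ₁,₁ⁿ. Then Z²(P,P) consists exactly of the maps θ of the form θ(x,y) = α·Δ₁,ₙ(x,y)·e_{n−1} + β·Δ₁,ₙ(x,y)·e_n for some α, β ∈ ℂ. -/

import Mathlib

open scoped BigOperators

/-- The bilinear map on `Fin n → ℂ` determined by structure constants `c`. -/
noncomputable def sb {n : ℕ} (c : Fin n → Fin n → Fin n → ℂ) :
    (Fin n → ℂ) →ₗ[ℂ] (Fin n → ℂ) →ₗ[ℂ] (Fin n → ℂ) :=
  LinearMap.mk₂ ℂ (fun x y k => ∑ a, ∑ b, c a b k * (x a * y b))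
    (fun x x' y => by
      funext k
      simp [add_mul, mul_add, Finset.sum_add_distrib])
    (fun r x y => by
      funext k
      simp only [Pi.smul_apply, smul_eq_mul, Finset.mul_sum]
      exact Finset.sum_congr rfl fun a _ => Finset.sum_congr rfl fun b _ => by ring)
    (fun x y y' => by
      funext k
      simp [mul_add, Finset.sum_add_distrib])
    (fun r x y => by
      funext k
      simp only [Pi.smul_apply, smul_eq_mul, Finset.mul_sum]
      exact Finset.sum_congr rfl fun a _ => Finset.sum_congr rfl fun b _ => by ring)

/-- The multiplication of the filiform algebra `μ₁,₁ⁿ`: with 1-based basis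
`e₁,…,eₙ`, `e_i · e_j = e_{i+j}` for `2 ≤ i+j ≤ n−1`, `i,j ≤ n−1`, and all other
products of basis vectors are zero (0-based: `a+b+1 = k` and `k+2 ≤ n`). -/
noncomputable def mu11 (n : ℕ) : (Fin n → ℂ) →ₗ[ℂ] (Fin n → ℂ) →ₗ[ℂ] (Fin n → ℂ) :=
  sb (fun a b k => if (a : ℕ) + (b : ℕ) + 1 = (k : ℕ) ∧ (k : ℕ) + 2 ≤ n then 1 else 0)

/-- For n > 3, Z²(μ₁,₁ⁿ, μ₁,₁ⁿ) consists exactly of the maps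
`θ(x,y) = α Δ₁ₙ(x,y) e_{n−1} + β Δ₁ₙ(x,y) eₙ` with `α, β ∈ ℂ`. -/
lemma mu_apply (n : ℕ) (x y : Fin n → ℂ) (k : Fin n) :
    mu11 n x y k = ∑ a : Fin n, ∑ b : Fin n,
      (if (a : ℕ) + (b : ℕ) + 1 = (k : ℕ) ∧ (k : ℕ) + 2 ≤ n then 1 else 0) * (x a * y b) := rfl

lemma mu_zero_left {n : ℕ} (x y : Fin n → ℂ) (hx : ∀ a : Fin n, (a : ℕ) + 3 ≤ n → x a = 0) :
    mu11 n x y = 0 := by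
  funext k
  rw [mu_apply]
  refine Finset.sum_eq_zero fun a _ => Finset.sum_eq_zero fun b _ => ?_
  split_ifs with h
  · rw [hx a (by omega)]; ring
  · rw [zero_mul]

lemma mu_zero_right {n : ℕ} (x y : Fin n → ℂ) (hy : ∀ b : Fin n, (b : ℕ) + 3 ≤ n → y b = 0) :
    mu11 n x y = 0 := by
  funext k
  rw [mu_apply]
  refine Finset.sum_eq_zero fun a _ => Finset.sum_eq_zero fun b _ => ?_
  split_ifs with h
  · rw [hy b (by omega), mul_zero, mul_zero]
  · rw [zero_mul]

lemma mu_single_left {n : ℕ} (i : Fin n) (w : Fin n → ℂ) (k : Fin n) :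
    mu11 n (Pi.single i (1:ℂ)) w k =
      if (i : ℕ) + 1 ≤ (k : ℕ) ∧ (k : ℕ) + 2 ≤ n then
        w ⟨(k : ℕ) - (i : ℕ) - 1, lt_of_le_of_lt (by omega) k.isLt⟩ else 0 := by
  rw [mu_apply]
  rw [Finset.sum_eq_single i]
  · rw [Pi.single_eq_same]
    split_ifs with h
    · rw [Finset.sum_eq_single (⟨(k : ℕ) - (i : ℕ) - 1, lt_of_le_of_lt (by omega) k.isLt⟩ : Fin n)]
      · rw [if_pos ⟨show (i:ℕ) + ((k:ℕ) - (i:ℕ) - 1) + 1 = (k:ℕ) by omega, h.2⟩, one_mul, one_mul]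
      · intro b _ hb
        rw [if_neg, zero_mul]
        rintro ⟨h1, -⟩
        exact hb (Fin.ext (show (b:ℕ) = (k:ℕ) - (i:ℕ) - 1 by omega))
      · intro h'; exact absurd (Finset.mem_univ _) h'
    · refine Finset.sum_eq_zero fun b _ => ?_
      rw [if_neg, zero_mul]
      rintro ⟨h1, h2⟩
      exact h ⟨by omega, h2⟩
  · intro a _ ha
    refine Finset.sum_eq_zero fun b _ => ?_
    rw [Pi.single_eq_of_ne ha, zero_mul, mul_zero]
  · intro h'; exact absurd (Finset.mem_univ _) h'

lemma mu_single_right {n : ℕ} (j : Fin n) (x : Fin n → ℂ) (k : Fin n) :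
    mu11 n x (Pi.single j (1:ℂ)) k =
      if (j : ℕ) + 1 ≤ (k : ℕ) ∧ (k : ℕ) + 2 ≤ n then
        x ⟨(k : ℕ) - (j : ℕ) - 1, lt_of_le_of_lt (by omega) k.isLt⟩ else 0 := by
  rw [mu_apply, Finset.sum_comm]
  rw [Finset.sum_eq_single j]
  · rw [Pi.single_eq_same]
    split_ifs with h
    · rw [Finset.sum_eq_single (⟨(k : ℕ) - (j : ℕ) - 1, lt_of_le_of_lt (by omega) k.isLt⟩ : Fin n)]
      · rw [if_pos ⟨show ((k:ℕ) - (j:ℕ) - 1) + (j:ℕ) + 1 = (k:ℕ) by omega, h.2⟩]; ring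
      · intro a _ ha
        rw [if_neg, zero_mul]
        rintro ⟨h1, -⟩
        exact ha (Fin.ext (show (a:ℕ) = (k:ℕ) - (j:ℕ) - 1 by omega))
      · intro h'; exact absurd (Finset.mem_univ _) h'
    · refine Finset.sum_eq_zero fun a _ => ?_
      rw [if_neg, zero_mul]
      rintro ⟨h1, h2⟩
      exact h ⟨by omega, h2⟩
  · intro b _ hb
    refine Finset.sum_eq_zero fun a _ => ?_
    rw [Pi.single_eq_of_ne hb, mul_zero, mul_zero]
  · intro h'; exact absurd (Finset.mem_univ _) h'

lemma expand_single {n : ℕ} (x : Fin n → ℂ) : x = ∑ i, x i • (Pi.single i (1:ℂ) : Fin n → ℂ) := by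
  funext k
  simp [Finset.sum_apply, Pi.single_apply]

lemma theta_expand {n : ℕ} (θ : (Fin n → ℂ) →ₗ[ℂ] (Fin n → ℂ) →ₗ[ℂ] (Fin n → ℂ))
    (x y : Fin n → ℂ) :
    θ x y = ∑ a : Fin n, ∑ b : Fin n,
      (x a * y b) • θ (Pi.single a (1:ℂ)) (Pi.single b (1:ℂ)) := by
  conv_lhs => rw [expand_single x, expand_single y]
  simp only [map_sum, map_smul, LinearMap.sum_apply, LinearMap.smul_apply, Finset.smul_sum,
    smul_smul]
  rw [Finset.sum_comm]
  exact Finset.sum_congr rfl fun a _ => Finset.sum_congr rfl fun b _ => by rw [mul_comm]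

lemma mul_e0 {n : ℕ} (c : ℕ) (hc : c + 3 ≤ n) :
    mu11 n (Pi.single (⟨0, by omega⟩ : Fin n) (1:ℂ)) (Pi.single (⟨c, by omega⟩ : Fin n) 1)
      = Pi.single (⟨c + 1, by omega⟩ : Fin n) 1 := by
  funext k
  rw [mu_single_left]
  simp only [Pi.single_apply, Fin.ext_iff]
  split_ifs <;> first | rfl | omega

section Fwd
variable {n : ℕ} (hn : n > 3) (θ : (Fin n → ℂ) →ₗ[ℂ] (Fin n → ℂ) →ₗ[ℂ] (Fin n → ℂ))
  (h1 : ∀ x y, θ x y = - θ y x)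
  (h3 : ∀ x y z, θ (mu11 n x y) z = mu11 n (θ x z) y + mu11 n x (θ y z))

include h1 in
lemma hdiag : ∀ x, θ x x = 0 := by
  intro x
  have h := h1 x x
  funext k
  have h2 := congrFun h k
  rw [Pi.neg_apply] at h2
  show θ x x k = 0
  linear_combination h2 / 2

include hn in
lemma ann_right (x : Fin n → ℂ) :
    mu11 n x (Pi.single (⟨n-1, by omega⟩ : Fin n) (1:ℂ)) = 0 :=
  mu_zero_right _ _ (fun b hb => Pi.single_eq_of_ne (by simp [Fin.ext_iff]; omega) 1)

include hn in
lemma ann_left (y : Fin n → ℂ) :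
    mu11 n (Pi.single (⟨n-1, by omega⟩ : Fin n) (1:ℂ)) y = 0 :=
  mu_zero_left _ _ (fun a ha => Pi.single_eq_of_ne (by simp [Fin.ext_iff]; omega) 1)

include hn in
lemma ann_right' (x : Fin n → ℂ) :
    mu11 n x (Pi.single (⟨n-2, by omega⟩ : Fin n) (1:ℂ)) = 0 :=
  mu_zero_right _ _ (fun b hb => Pi.single_eq_of_ne (by simp [Fin.ext_iff]; omega) 1)

include hn in
lemma ann_left' (y : Fin n → ℂ) :
    mu11 n (Pi.single (⟨n-2, by omega⟩ : Fin n) (1:ℂ)) y = 0 :=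
  mu_zero_left _ _ (fun a ha => Pi.single_eq_of_ne (by simp [Fin.ext_iff]; omega) 1)

include hn h3 in
lemma htop : ∀ z (b : Fin n), (b : ℕ) + 3 ≤ n →
    θ (Pi.single (⟨n-1, by omega⟩ : Fin n) (1:ℂ)) z b = 0 := by
  intro z b hb
  have h := h3 (Pi.single (⟨0, by omega⟩ : Fin n) (1:ℂ))
    (Pi.single (⟨n-1, by omega⟩ : Fin n) (1:ℂ)) z
  rw [ann_right hn, map_zero, LinearMap.zero_apply, ann_right hn, zero_add] at h
  have h2 := congrFun h.symm ⟨(b : ℕ) + 1, by omega⟩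
  rw [mu_single_left, if_pos ⟨show (0:ℕ) + 1 ≤ (b:ℕ) + 1 by omega,
    show ((b:ℕ) + 1) + 2 ≤ n by omega⟩] at h2
  rw [Pi.zero_apply] at h2
  simpa using h2

include hn h1 h3 in
lemma claimA : ∀ c : ℕ, ∀ hc : c + 2 ≤ n,
    θ (Pi.single (⟨0, by omega⟩ : Fin n) (1:ℂ)) (Pi.single (⟨c, by omega⟩ : Fin n) (1:ℂ)) = 0 := by
  intro c
  induction c with
  | zero => intro _; exact hdiag θ h1 _
  | succ c ih =>
    intro hc
    rw [h1, ← mul_e0 c (by omega), h3, hdiag θ h1,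
      show θ (Pi.single (⟨c, by omega⟩ : Fin n) (1:ℂ)) (Pi.single (⟨0, by omega⟩ : Fin n) (1:ℂ))
        = _ from h1 _ _, ih (by omega)]
    simp

include hn h1 h3 in
lemma claimB : ∀ b c : ℕ, ∀ hb : b + 2 ≤ n, ∀ hc : c + 2 ≤ n,
    θ (Pi.single (⟨b, by omega⟩ : Fin n) (1:ℂ)) (Pi.single (⟨c, by omega⟩ : Fin n) (1:ℂ)) = 0 := by
  intro b
  induction b with
  | zero => intro c _ hc; exact claimA hn θ h1 h3 c hc
  | succ b ih =>
    intro c hb hc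
    rw [← mul_e0 b (by omega), h3, claimA hn θ h1 h3 c hc, ih c (by omega) hc]
    simp

include hn h1 h3 in
lemma hv0 : ∀ a : Fin n, (a : ℕ) + 3 ≤ n →
    θ (Pi.single (⟨0, by omega⟩ : Fin n) (1:ℂ)) (Pi.single (⟨n-1, by omega⟩ : Fin n) (1:ℂ)) a
      = 0 := by
  intro a ha
  rw [h1, Pi.neg_apply, htop hn θ h3 _ a ha, neg_zero]

include hn h1 h3 in
lemma claimC : ∀ b : ℕ, ∀ h1b : 1 ≤ b, ∀ hb : b + 2 ≤ n,
    θ (Pi.single (⟨b, by omega⟩ : Fin n) (1:ℂ)) (Pi.single (⟨n-1, by omega⟩ : Fin n) (1:ℂ))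
      = 0 := by
  intro b
  induction b with
  | zero => omega
  | succ b ih =>
    intro _ hb
    rw [← mul_e0 b (by omega), h3]
    rw [mu_zero_left _ _ (hv0 hn θ h1 h3)]
    rcases Nat.eq_zero_or_pos b with hb0 | hb0
    · subst hb0
      rw [mu_zero_right _ _ (hv0 hn θ h1 h3), add_zero]
    · rw [ih hb0 (by omega)]
      simp
include hn h1 h3 in
lemma key (a b : Fin n) :
    θ (Pi.single a (1:ℂ)) (Pi.single b (1:ℂ)) =
      ((if a = (⟨0, by omega⟩ : Fin n) then (1:ℂ) else 0) *
        (if b = (⟨n-1, by omega⟩ : Fin n) then 1 else 0) -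
       (if a = (⟨n-1, by omega⟩ : Fin n) then 1 else 0) *
        (if b = (⟨0, by omega⟩ : Fin n) then 1 else 0)) •
      θ (Pi.single (⟨0, by omega⟩ : Fin n) (1:ℂ)) (Pi.single (⟨n-1, by omega⟩ : Fin n) (1:ℂ)) := by
  have hne : ¬ ((⟨n-1, by omega⟩ : Fin n) = (⟨0, by omega⟩ : Fin n)) := by
    simp [Fin.ext_iff]; omega
  have hne' : ¬ ((⟨0, by omega⟩ : Fin n) = (⟨n-1, by omega⟩ : Fin n)) := by
    simp [Fin.ext_iff]; omega
  by_cases hat : a = (⟨n-1, by omega⟩ : Fin n)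
  · by_cases hbt : b = (⟨n-1, by omega⟩ : Fin n)
    · rw [hat, hbt, hdiag θ h1]
      simp [hne]
    · rw [hat, h1]
      by_cases hb0 : b = (⟨0, by omega⟩ : Fin n)
      · rw [hb0]
        simp [hne, hne']
      · have hbv1 : 1 ≤ (b:ℕ) := by
          rcases Nat.eq_zero_or_pos (b:ℕ) with h | h
          · exact absurd (Fin.ext (show (b:ℕ) = 0 from h)) hb0
          · exact h
        have hbv2 : (b:ℕ) + 2 ≤ n := by
          have hlt := b.isLt
          rcases Nat.lt_or_ge (b:ℕ) (n-1) with h | h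
          · omega
          · exact absurd (Fin.ext (show (b:ℕ) = n - 1 by omega)) hbt
        have hC : θ (Pi.single b (1:ℂ)) (Pi.single (⟨n-1, by omega⟩ : Fin n) (1:ℂ)) = 0 :=
          claimC hn θ h1 h3 (b:ℕ) hbv1 hbv2
        rw [hC]
        simp [hne, hb0]
  · have hav2 : (a:ℕ) + 2 ≤ n := by
      have hlt := a.isLt
      rcases Nat.lt_or_ge (a:ℕ) (n-1) with h | h
      · omega
      · exact absurd (Fin.ext (show (a:ℕ) = n - 1 by omega)) hat
    by_cases hbt : b = (⟨n-1, by omega⟩ : Fin n)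
    · by_cases ha0 : a = (⟨0, by omega⟩ : Fin n)
      · rw [ha0, hbt]
        simp [hne, hne']
      · have hav1 : 1 ≤ (a:ℕ) := by
          rcases Nat.eq_zero_or_pos (a:ℕ) with h | h
          · exact absurd (Fin.ext (show (a:ℕ) = 0 from h)) ha0
          · exact h
        have hC : θ (Pi.single a (1:ℂ)) (Pi.single (⟨n-1, by omega⟩ : Fin n) (1:ℂ)) = 0 :=
          claimC hn θ h1 h3 (a:ℕ) hav1 hav2
        rw [hbt, hC]
        simp [ha0, hat]
    · have hbv2 : (b:ℕ) + 2 ≤ n := by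
        have hlt := b.isLt
        rcases Nat.lt_or_ge (b:ℕ) (n-1) with h | h
        · omega
        · exact absurd (Fin.ext (show (b:ℕ) = n - 1 by omega)) hbt
      have hB : θ (Pi.single a (1:ℂ)) (Pi.single b (1:ℂ)) = 0 :=
        claimB hn θ h1 h3 (a:ℕ) (b:ℕ) hav2 hbv2
      rw [hB]
      simp [hat, hbt]
end Fwd
theorem stmt7 (n : ℕ) (hn : 3 < n)
    (θ : (Fin n → ℂ) →ₗ[ℂ] (Fin n → ℂ) →ₗ[ℂ] (Fin n → ℂ)) :
    ((∀ x y, θ x y = - θ y x) ∧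
     (∀ x y z, θ (θ x y) z + θ (θ y z) x + θ (θ z x) y = 0) ∧
     (∀ x y z, θ (mu11 n x y) z = mu11 n (θ x z) y + mu11 n x (θ y z))) ↔
    ∃ α β : ℂ, ∀ x y : Fin n → ℂ,
      θ x y =
        (α * (x ⟨0, by omega⟩ * y ⟨n - 1, by omega⟩ -
              x ⟨n - 1, by omega⟩ * y ⟨0, by omega⟩)) •
            (Pi.single (⟨n - 2, by omega⟩ : Fin n) (1 : ℂ) : Fin n → ℂ) +
        (β * (x ⟨0, by omega⟩ * y ⟨n - 1, by omega⟩ -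
              x ⟨n - 1, by omega⟩ * y ⟨0, by omega⟩)) •
            (Pi.single (⟨n - 1, by omega⟩ : Fin n) (1 : ℂ) : Fin n → ℂ) := by
  constructor
  · rintro ⟨h1, -, h3⟩
    refine ⟨θ (Pi.single (⟨0, by omega⟩ : Fin n) (1:ℂ))
        (Pi.single (⟨n-1, by omega⟩ : Fin n) (1:ℂ)) ⟨n-2, by omega⟩,
      θ (Pi.single (⟨0, by omega⟩ : Fin n) (1:ℂ))
        (Pi.single (⟨n-1, by omega⟩ : Fin n) (1:ℂ)) ⟨n-1, by omega⟩, ?_⟩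
    intro x y
    rw [theta_expand θ x y]
    rw [show (∑ a : Fin n, ∑ b : Fin n,
        (x a * y b) • θ (Pi.single a (1:ℂ)) (Pi.single b (1:ℂ)))
      = ∑ a : Fin n, ∑ b : Fin n, (x a * y b *
        ((if a = (⟨0, by omega⟩ : Fin n) then (1:ℂ) else 0) *
          (if b = (⟨n-1, by omega⟩ : Fin n) then 1 else 0) -
         (if a = (⟨n-1, by omega⟩ : Fin n) then 1 else 0) *
          (if b = (⟨0, by omega⟩ : Fin n) then 1 else 0))) •
        θ (Pi.single (⟨0, by omega⟩ : Fin n) (1:ℂ)) (Pi.single (⟨n-1, by omega⟩ : Fin n) (1:ℂ))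
      from Finset.sum_congr rfl fun a _ => Finset.sum_congr rfl fun b _ => by
        rw [key hn θ h1 h3 a b, smul_smul]]
    simp only [← Finset.sum_smul]
    have hscal : (∑ a : Fin n, ∑ b : Fin n, x a * y b *
        ((if a = (⟨0, by omega⟩ : Fin n) then (1:ℂ) else 0) *
          (if b = (⟨n-1, by omega⟩ : Fin n) then 1 else 0) -
         (if a = (⟨n-1, by omega⟩ : Fin n) then 1 else 0) *
          (if b = (⟨0, by omega⟩ : Fin n) then 1 else 0)))
        = x ⟨0, by omega⟩ * y ⟨n-1, by omega⟩ - x ⟨n-1, by omega⟩ * y ⟨0, by omega⟩ := by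
      simp [mul_sub, Finset.sum_sub_distrib, mul_ite, mul_one, mul_zero,
        Finset.sum_ite_eq']
    rw [hscal]
    funext k
    simp only [Pi.add_apply, Pi.smul_apply, smul_eq_mul, Pi.single_apply]
    by_cases hk1 : k = (⟨n-2, by omega⟩ : Fin n)
    · rw [if_pos hk1, if_neg (by rw [hk1]; simp [Fin.ext_iff]; omega), hk1]
      ring
    · by_cases hkt : k = (⟨n-1, by omega⟩ : Fin n)
      · rw [if_neg hk1, if_pos hkt, hkt]
        ring
      · rw [if_neg hk1, if_neg hkt,
          hv0 hn θ h1 h3 k (by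
            have hlt := k.isLt
            rw [Fin.ext_iff] at hk1 hkt
            simp at hk1 hkt
            omega)]
        ring
  · rintro ⟨α, β, hθ⟩
    have e1 : (Pi.single (⟨n-2, by omega⟩ : Fin n) (1:ℂ) : Fin n → ℂ) (⟨0, by omega⟩ : Fin n) = 0 :=
      Pi.single_eq_of_ne (by simp [Fin.ext_iff]; omega) 1
    have e2 : (Pi.single (⟨n-1, by omega⟩ : Fin n) (1:ℂ) : Fin n → ℂ) (⟨0, by omega⟩ : Fin n) = 0 :=
      Pi.single_eq_of_ne (by simp [Fin.ext_iff]; omega) 1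
    have e3 : (Pi.single (⟨n-2, by omega⟩ : Fin n) (1:ℂ) : Fin n → ℂ) (⟨n-1, by omega⟩ : Fin n) = 0 :=
      Pi.single_eq_of_ne (by simp [Fin.ext_iff]; omega) 1
    have e4 : (Pi.single (⟨n-1, by omega⟩ : Fin n) (1:ℂ) : Fin n → ℂ) (⟨n-1, by omega⟩ : Fin n) = 1 :=
      Pi.single_eq_same _ _
    have hc0 : ∀ x y, θ x y (⟨0, by omega⟩ : Fin n) = 0 := by
      intro x y
      rw [hθ]
      simp [e1, e2]
    have hct : ∀ x y, θ x y (⟨n-1, by omega⟩ : Fin n) =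
        β * (x ⟨0, by omega⟩ * y ⟨n-1, by omega⟩ - x ⟨n-1, by omega⟩ * y ⟨0, by omega⟩) := by
      intro x y
      rw [hθ]
      simp [e3, e4]
    refine ⟨?_, ?_, ?_⟩
    · intro x y
      rw [hθ x y, hθ y x]
      funext k
      simp only [Pi.add_apply, Pi.smul_apply, Pi.neg_apply, smul_eq_mul]
      ring
    · intro x y z
      rw [hθ (θ x y) z, hθ (θ y z) x, hθ (θ z x) y]
      simp only [hc0, hct]
      funext k
      simp only [Pi.add_apply, Pi.smul_apply, Pi.zero_apply, smul_eq_mul]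
      ring
    · intro x y z
      have hm0 : mu11 n x y (⟨0, by omega⟩ : Fin n) = 0 := by
        rw [mu_apply]
        refine Finset.sum_eq_zero fun a _ => Finset.sum_eq_zero fun b _ => ?_
        rw [if_neg, zero_mul]
        rintro ⟨hcon, -⟩
        exact absurd (show (a:ℕ) + (b:ℕ) + 1 = 0 from hcon) (by omega)
      have hmt : mu11 n x y (⟨n-1, by omega⟩ : Fin n) = 0 := by
        rw [mu_apply]
        refine Finset.sum_eq_zero fun a _ => Finset.sum_eq_zero fun b _ => ?_
        rw [if_neg, zero_mul]
        rintro ⟨-, hcon⟩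
        exact absurd (show (n-1) + 2 ≤ n from hcon) (by omega)
      rw [hθ (mu11 n x y) z, hθ x z, hθ y z, hm0, hmt]
      simp only [map_add, map_smul, LinearMap.add_apply, LinearMap.smul_apply,
        ann_left hn, ann_left' hn, ann_right hn, ann_right' hn, smul_zero, add_zero, zero_add]
      simp
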